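/- Let E be a real inner product space and K ⊆ E a convex set of diameter at most D > 0 (i.e. ‖x − y‖ ≤ D for all x, y ∈ K). Let T ≥ 1, G > 0, and let ℓ₁, …, ℓ_T : E → ℝ be differentiable convex functions (ℓ_t(y) ≥ ℓ_t(x) + ⟨∇ℓ_t(x), y − x⟩ for x, y ∈ K) with ‖∇ℓ_t(x)‖ ≤ G for x ∈ K. Let η₁ ≥ η₂ ≥ … ≥ η_T > 0. Suppose μ̂₁, …, μ̂_{T+1} ∈ K and ν₁, …, ν_{T+1} ∈ K satisfy, for every 1 ≤ t ≤ T, the ADJUST contraction property ‖μ̂_{t+1} − ν_{t+1}‖ ≤ ‖(μ̂_t − η_t ∇ℓ_t(μ̂_t)) − ν_t‖. Then Σ_{t=1}^{T} ℓ_t(μ̂_t) − Σ_{t=1}^{T} ℓ_t(ν_t) ≤ D²/(2η_T) + (G²/2) Σ_{t=1}^{T} η_t. -/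

import Mathlib

open RealInnerProductSpace Finset


lemma tele_aux (D : ℝ) (b η : ℕ → ℝ) :
    ∀ T, 1 ≤ T →
    (∀ t ∈ Finset.Icc 1 (T+1), 0 ≤ b t) →
    (∀ t ∈ Finset.Icc 1 (T+1), b t ≤ D^2) →
    (∀ t ∈ Finset.Icc 1 T, 0 < η t) →
    (∀ t, 1 ≤ t → t < T → η (t+1) ≤ η t) →
    ∑ t ∈ Finset.Icc 1 T, (b t - b (t+1))/(2 * η t) ≤ (D^2 - b (T+1))/(2 * η T) := by
  intro T hT
  induction T, hT using Nat.le_induction with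
  | base =>
      intro hb0 hbD hη _
      simp only [Finset.Icc_self, Finset.sum_singleton]
      have hη1 : 0 < η 1 := hη 1 (by simp)
      have hb1 : b 1 ≤ D^2 := hbD 1 (by simp)
      gcongr
      all_goals linarith
  | succ T hT ih =>
      intro hb0 hbD hη hmono
      have hsub : ∀ t ∈ Finset.Icc 1 (T+1), t ∈ Finset.Icc 1 (T+2) := by
        intro t ht; simp at ht ⊢; omega
      have hsub' : ∀ t ∈ Finset.Icc 1 T, t ∈ Finset.Icc 1 (T+1) := by
        intro t ht; simp at ht ⊢; omega
      have ihh := ih (fun t ht => hb0 t (hsub t ht)) (fun t ht => hbD t (hsub t ht))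
        (fun t ht => hη t (hsub' t ht)) (fun t h1 h2 => hmono t h1 (by omega))
      rw [Finset.sum_Icc_succ_top (by omega : 1 ≤ T + 1)]
      have hηT : 0 < η T := hη T (by simp; omega)
      have hηT1 : 0 < η (T+1) := hη (T+1) (by simp)
      have hmT : η (T+1) ≤ η T := hmono T hT (by omega)
      have hbT1 : b (T+1) ≤ D^2 := hbD (T+1) (hsub (T+1) (by simp))
      have step : (D^2 - b (T+1))/(2 * η T) ≤ (D^2 - b (T+1))/(2 * η (T+1)) := by
        gcongr
        all_goals linarith
      have comb : (D^2 - b (T+1))/(2 * η (T+1)) + (b (T+1) - b (T+2))/(2 * η (T+1))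
          = (D^2 - b (T+2))/(2 * η (T+1)) := by
        rw [← add_div]; ring_nf
      linarith

/-- Proposition `D-regret_convex`: dynamic regret of Dynamic OGD against the advice sequence.
If the convex losses `ℓ_t` have `G`-bounded gradients on a convex set `K` of diameter at most
`D`, the step sizes `η_t` are positive and nonincreasing, and the predictors satisfy the ADJUST
contraction `‖μ̂_{t+1} − ν_{t+1}‖ ≤ ‖(μ̂_t − η_t ∇ℓ_t(μ̂_t)) − ν_t‖` for all `1 ≤ t ≤ T`, then
`Σ ℓ_t(μ̂_t) − Σ ℓ_t(ν_t) ≤ D²/(2η_T) + (G²/2) Σ η_t`. -/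
theorem dogd_regret_vs_advice {E : Type*} [NormedAddCommGroup E] [InnerProductSpace ℝ E]
    [CompleteSpace E]
    (K : Set E) (hK : Convex ℝ K) (D : ℝ) (hD : 0 < D)
    (hdiam : ∀ x ∈ K, ∀ y ∈ K, ‖x - y‖ ≤ D)
    (T : ℕ) (hT : 1 ≤ T) (G : ℝ) (hG : 0 < G)
    (ℓ : ℕ → E → ℝ) (g : ℕ → E → E)
    (hdiff : ∀ t, ∀ x : E, HasGradientAt (ℓ t) (g t x) x)
    (hconv : ∀ t ∈ Icc 1 T, ∀ x ∈ K, ∀ y ∈ K, ℓ t x + ⟪g t x, y - x⟫ ≤ ℓ t y)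
    (hGb : ∀ t ∈ Icc 1 T, ∀ x ∈ K, ‖g t x‖ ≤ G)
    (η : ℕ → ℝ) (hηpos : ∀ t ∈ Icc 1 T, 0 < η t)
    (hηmono : ∀ t, 1 ≤ t → t < T → η (t + 1) ≤ η t)
    (p ν : ℕ → E)
    (hpK : ∀ t ∈ Icc 1 (T + 1), p t ∈ K) (hνK : ∀ t ∈ Icc 1 (T + 1), ν t ∈ K)
    (hadj : ∀ t ∈ Icc 1 T, ‖p (t + 1) - ν (t + 1)‖ ≤ ‖(p t - η t • g t (p t)) - ν t‖) :
    ∑ t ∈ Icc 1 T, ℓ t (p t) - ∑ t ∈ Icc 1 T, ℓ t (ν t) ≤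
      D ^ 2 / (2 * η T) + G ^ 2 / 2 * ∑ t ∈ Icc 1 T, η t := by
  set b : ℕ → ℝ := fun t => ‖p t - ν t‖^2 with hb
  have hmemT1 : ∀ t ∈ Icc 1 T, t ∈ Icc 1 (T+1) ∧ t + 1 ∈ Icc 1 (T+1) := by
    intro t ht; simp at ht ⊢; omega
  -- per-step inequality
  have key : ∀ t ∈ Icc 1 T, ℓ t (p t) - ℓ t (ν t)
      ≤ (b t - b (t+1))/(2 * η t) + η t * G^2/2 := by
    intro t ht
    obtain ⟨ht1, ht2⟩ := hmemT1 t ht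
    have hpt := hpK t ht1
    have hνt := hνK t ht1
    have hs : 0 < η t := hηpos t ht
    set u := g t (p t) with hu
    set x := p t - ν t with hx
    have hGu : ‖u‖ ≤ G := hGb t ht (p t) hpt
    have hsq : b (t+1) ≤ ‖x - η t • u‖^2 := by
      have h := hadj t ht
      have hrw : (p t - η t • u) - ν t = x - η t • u := by rw [hx]; abel
      rw [hrw] at h
      exact pow_le_pow_left₀ (norm_nonneg _) h 2
    have hexp : ‖x - η t • u‖^2 = ‖x‖^2 - 2 * (η t * ⟪x, u⟫) + (η t)^2 * ‖u‖^2 := by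
      rw [norm_sub_sq_real, real_inner_smul_right, norm_smul]
      simp [abs_of_pos hs]
      ring
    have hinner : ℓ t (p t) - ℓ t (ν t) ≤ ⟪x, u⟫ := by
      have := hconv t ht (p t) hpt (ν t) hνt
      have hcomm : ⟪u, ν t - p t⟫ = - ⟪x, u⟫ := by
        rw [real_inner_comm, hx, ← inner_neg_left]
        congr 1; abel
      rw [hcomm] at this
      linarith
    have hbt : b t = ‖x‖^2 := rfl
    have h2s : (0:ℝ) < 2 * η t := by linarith
    have hmain : (⟪x, u⟫ - η t * G^2/2) * (2 * η t) ≤ b t - b (t+1) := by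
      have hu2 : ‖u‖^2 ≤ G^2 := by nlinarith [norm_nonneg u]
      nlinarith [sq_nonneg (η t)]
    have hdiv : ⟪x, u⟫ - η t * G^2/2 ≤ (b t - b (t+1))/(2 * η t) :=
      (le_div_iff₀ h2s).mpr hmain
    linarith
  -- hypotheses for telescoping
  have hb0 : ∀ t ∈ Finset.Icc 1 (T+1), 0 ≤ b t := fun t _ => sq_nonneg _
  have hbD : ∀ t ∈ Finset.Icc 1 (T+1), b t ≤ D^2 := by
    intro t ht
    have h1 := hdiam (p t) (hpK t ht) (ν t) (hνK t ht)
    have h2 := norm_nonneg (p t - ν t)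
    have h3 : b t = ‖p t - ν t‖^2 := rfl
    nlinarith
  have tele := tele_aux D b η T hT hb0 hbD hηpos hηmono
  have hηT : 0 < η T := hηpos T (by simp; omega)
  have hbfin : 0 ≤ b (T+1) := sq_nonneg _
  have tele2 : ∑ t ∈ Icc 1 T, (b t - b (t+1))/(2 * η t) ≤ D^2/(2 * η T) := by
    refine tele.trans ?_
    gcongr
    all_goals linarith
  have hsum : ∑ t ∈ Icc 1 T, ℓ t (p t) - ∑ t ∈ Icc 1 T, ℓ t (ν t)
      = ∑ t ∈ Icc 1 T, (ℓ t (p t) - ℓ t (ν t)) := (Finset.sum_sub_distrib _ _).symm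
  rw [hsum]
  calc ∑ t ∈ Icc 1 T, (ℓ t (p t) - ℓ t (ν t))
      ≤ ∑ t ∈ Icc 1 T, ((b t - b (t+1))/(2 * η t) + η t * G^2/2) :=
        Finset.sum_le_sum key
    _ = ∑ t ∈ Icc 1 T, (b t - b (t+1))/(2 * η t) + ∑ t ∈ Icc 1 T, η t * G^2/2 :=
        Finset.sum_add_distrib
    _ ≤ D^2/(2 * η T) + G^2/2 * ∑ t ∈ Icc 1 T, η t := by
        have : ∑ t ∈ Icc 1 T, η t * G^2/2 = G^2/2 * ∑ t ∈ Icc 1 T, η t := by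
          rw [Finset.mul_sum]
          apply Finset.sum_congr rfl
          intro t _; ring
        linarith
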